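/- Let y : [0,∞) → R be a C^1 function with y(0) > 0, whose derivative y' is Lipschitz with |y''(t)| ≤ 1/2 wherever it exists (in particular y''(t) > -1/2 a.e.). If t_E > 0 is a time with y(t_E) = 0 and y'(t_E) = 0, then t_E > sqrt(y(0)). -/
import Mathlib


/-- a particle of a perfect solution starting at height `y 0 > 0`
with velocity of Lipschitz constant `1/2` cannot reach rest at the origin before
time `sqrt (y 0)`. -/
theorem equilibration_time_lower_bound
    (y y' : ℝ → ℝ) (hy0 : 0 < y 0)
    (hderiv : ∀ t ∈ Set.Ici (0 : ℝ), HasDerivAt y (y' t) t)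
    (hlip : LipschitzOnWith (1 / 2 : NNReal) y' (Set.Ici (0 : ℝ)))
    (tE : ℝ) (htE : 0 < tE) (hyE : y tE = 0) (hvE : y' tE = 0) :
    Real.sqrt (y 0) < tE := by
  have hsub : Set.uIcc (0:ℝ) tE ⊆ Set.Ici 0 := by
    rw [Set.uIcc_of_le htE.le]; exact Set.Icc_subset_Ici_self
  have hcont : ContinuousOn y' (Set.uIcc (0:ℝ) tE) := hlip.continuousOn.mono hsub
  have hint : IntervalIntegrable y' MeasureTheory.volume 0 tE := hcont.intervalIntegrable
  have hftc : ∫ t in (0:ℝ)..tE, y' t = y tE - y 0 :=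
    intervalIntegral.integral_eq_sub_of_hasDerivAt (fun t ht => hderiv t (hsub ht)) hint
  have hbound : ∀ t ∈ Set.Icc (0:ℝ) tE, -y' t ≤ (tE - t) / 2 := by
    intro t ht
    have h1 : dist (y' t) (y' tE) ≤ (1/2 : ℝ) * dist t tE := by
      have := hlip.dist_le_mul t ht.1 tE htE.le
      simpa using this
    rw [Real.dist_eq, Real.dist_eq, hvE, sub_zero,
      abs_of_nonpos (by linarith [ht.2] : t - tE ≤ 0)] at h1
    have := neg_abs_le (y' t)
    linarith
  have hintg : IntervalIntegrable (fun t => (tE - t) / 2) MeasureTheory.volume 0 tE := by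
    apply ContinuousOn.intervalIntegrable
    fun_prop
  have hmono : ∫ t in (0:ℝ)..tE, -y' t ≤ ∫ t in (0:ℝ)..tE, (tE - t) / 2 := by
    apply intervalIntegral.integral_mono_on htE.le hint.neg hintg
    exact hbound
  have hI : (∫ t in (0:ℝ)..tE, (tE - t) / 2) = tE ^ 2 / 4 := by
    have h : ∀ t : ℝ, (tE - t) / 2 = tE / 2 - t / 2 := fun t => by ring
    simp only [h]
    rw [intervalIntegral.integral_sub intervalIntegrable_const
      (by apply ContinuousOn.intervalIntegrable; fun_prop : IntervalIntegrable (fun t : ℝ => t / 2) MeasureTheory.volume 0 tE)]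
    simp [intervalIntegral.integral_div, integral_id]
    ring
  rw [intervalIntegral.integral_neg, hftc, hyE] at hmono
  have hy0le : y 0 ≤ tE ^ 2 / 4 := by rw [hI] at hmono; linarith
  have : Real.sqrt (y 0) < Real.sqrt (tE ^ 2) := by
    apply Real.sqrt_lt_sqrt hy0.le
    nlinarith
  rwa [Real.sqrt_sq htE.le] at this
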